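/- arXiv:2002.05048 — 2 statements merged into one kernel-verified Lean document; each statement's English description precedes it below -/
import Mathlib

section
/- Consider a finite probability space with events A (case) and U = Aᶜ (control) with π = P(A) ∈ (0,1), and a random genotype at a causal variant taking values (A_kA_l) for k,l ∈ {1,2}. Suppose the genotype at a marker M is conditionally independent of the case/control status given the genotype at the causal variant, i.e. P(M_iM_j | A_kA_l, A) = P(M_iM_j | A_kA_l). Let p_{kl} = P(A_kA_l), π_{kl} = P(A | A_kA_l) with π₁₂ = π₂₁, q_{ij} = P(M_iM_j), and D_{klij} = P(A_kA_lM_iM_j) - p_{kl}q_{ij}. Then P(M_iM_j | A) = q_{ij} + D₁₁ᵢⱼ(π₁₁-π₁₂)/π + D₂₂ᵢⱼ(π₂₂-π₁₂)/π. -/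
open MeasureTheory

lemma aux_part {Ω : Type*} [MeasurableSpace Ω] (μ : Measure Ω) [IsProbabilityMeasure μ]
    (G : Ω → Fin 2 × Fin 2) (hG : Measurable G) (S : Set Ω) (hS : MeasurableSet S) :
    (μ S).toReal = ∑ v : Fin 2 × Fin 2, (μ (S ∩ G ⁻¹' {v})).toReal := by
  have h : S = ⋃ v : Fin 2 × Fin 2, S ∩ G ⁻¹' {v} := by ext x; simp
  have hdisj : Pairwise (Function.onFun Disjoint fun v : Fin 2 × Fin 2 => S ∩ G ⁻¹' {v}) := by
    intro a b hab
    refine Set.disjoint_left.2 ?_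
    rintro x ⟨-, hxa⟩ ⟨-, hxb⟩
    simp only [Set.mem_preimage, Set.mem_singleton_iff] at hxa hxb
    exact hab (hxa.symm.trans hxb)
  have hmeas : ∀ v : Fin 2 × Fin 2, MeasurableSet (S ∩ G ⁻¹' {v}) :=
    fun v => hS.inter (hG (measurableSet_singleton v))
  have h2 : μ S = ∑ v : Fin 2 × Fin 2, μ (S ∩ G ⁻¹' {v}) := by
    conv_lhs => rw [h]
    rw [measure_iUnion hdisj hmeas, tsum_fintype]
  rw [h2, ENNReal.toReal_sum]
  exact fun v _ => (measure_lt_top μ _).ne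

/-- Lemma 1 of the paper: conditional marker genotype frequency among cases. -/
theorem stmt_3
    {Ω : Type*} [MeasurableSpace Ω] (μ : Measure Ω) [IsProbabilityMeasure μ]
    (A : Set Ω) (hA : MeasurableSet A)
    (G M : Ω → Fin 2 × Fin 2) (hG : Measurable G) (hM : Measurable M)
    (π : ℝ) (hπdef : π = (μ A).toReal) (hπ0 : 0 < π) (hπ1 : π < 1)
    (p : Fin 2 × Fin 2 → ℝ) (hp : ∀ kl, p kl = (μ (G ⁻¹' {kl})).toReal)
    (πc : Fin 2 × Fin 2 → ℝ)
    (hπc : ∀ kl, πc kl = (μ (A ∩ G ⁻¹' {kl})).toReal / p kl)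
    (hsym : πc (0, 1) = πc (1, 0))
    (q : Fin 2 × Fin 2 → ℝ) (hq : ∀ ij, q ij = (μ (M ⁻¹' {ij})).toReal)
    (D : Fin 2 × Fin 2 → Fin 2 × Fin 2 → ℝ)
    (hD : ∀ kl ij, D kl ij = (μ (G ⁻¹' {kl} ∩ M ⁻¹' {ij})).toReal - p kl * q ij)
    -- conditional independence of marker genotype and case/control status
    -- given the variant genotype: P(M, G, A) · P(G) = P(M, G) · P(G, A)
    (hci : ∀ kl ij,
      (μ (M ⁻¹' {ij} ∩ G ⁻¹' {kl} ∩ A)).toReal * p kl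
        = (μ (M ⁻¹' {ij} ∩ G ⁻¹' {kl})).toReal * (μ (G ⁻¹' {kl} ∩ A)).toReal)
    (ij : Fin 2 × Fin 2) :
    (μ (M ⁻¹' {ij} ∩ A)).toReal / π
      = q ij + D (0, 0) ij * (πc (0, 0) - πc (0, 1)) / π
          + D (1, 1) ij * (πc (1, 1) - πc (0, 1)) / π := by
  have hMmeas : MeasurableSet (M ⁻¹' {ij}) := hM (measurableSet_singleton ij)
  -- per-genotype facts
  have key : ∀ kl : Fin 2 × Fin 2,
      (μ (M ⁻¹' {ij} ∩ A ∩ G ⁻¹' {kl})).toReal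
        = (μ (M ⁻¹' {ij} ∩ G ⁻¹' {kl})).toReal * πc kl ∧
      (μ (A ∩ G ⁻¹' {kl})).toReal = p kl * πc kl := by
    intro kl
    have hAG : (μ (A ∩ G ⁻¹' {kl})).toReal ≤ p kl := by
      rw [hp kl]
      exact ENNReal.toReal_mono (measure_lt_top μ _).ne
        (measure_mono Set.inter_subset_right)
    have hAG0 : 0 ≤ (μ (A ∩ G ⁻¹' {kl})).toReal := ENNReal.toReal_nonneg
    have hMA : (μ (M ⁻¹' {ij} ∩ A ∩ G ⁻¹' {kl})).toReal ≤ p kl := by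
      rw [hp kl]
      exact ENNReal.toReal_mono (measure_lt_top μ _).ne
        (measure_mono Set.inter_subset_right)
    have hMA0 : 0 ≤ (μ (M ⁻¹' {ij} ∩ A ∩ G ⁻¹' {kl})).toReal := ENNReal.toReal_nonneg
    by_cases hpkl : p kl = 0
    · have hπczero : πc kl = 0 := by rw [hπc kl, hpkl, div_zero]
      constructor
      · rw [hπczero, mul_zero]; linarith [hpkl ▸ hMA]
      · rw [hπczero, hpkl, zero_mul]; linarith [hpkl ▸ hAG]
    · have hkey := hci kl ij
      have hcomm : M ⁻¹' {ij} ∩ A ∩ G ⁻¹' {kl} = M ⁻¹' {ij} ∩ G ⁻¹' {kl} ∩ A := by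
        ext x; simp; tauto
      have hcomm2 : G ⁻¹' {kl} ∩ A = A ∩ G ⁻¹' {kl} := Set.inter_comm _ _
      rw [hcomm2] at hkey
      constructor
      · rw [hcomm]
        rw [hπc kl, mul_div_assoc', eq_div_iff hpkl]
        linarith [hkey]
      · rw [hπc kl]
        field_simp
  -- law of total probability facts
  have hπsum := aux_part μ G hG A hA
  have hqsum := aux_part μ G hG (M ⁻¹' {ij}) hMmeas
  have hMAsum := aux_part μ G hG (M ⁻¹' {ij} ∩ A) (hMmeas.inter hA)
  have h1sum := aux_part μ G hG Set.univ MeasurableSet.univ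
  simp only [Set.univ_inter, measure_univ, ENNReal.toReal_one] at h1sum
  rw [Fintype.sum_prod_type] at hπsum hqsum hMAsum h1sum
  simp only [Fin.sum_univ_two] at hπsum hqsum hMAsum h1sum
  simp only [← hp] at h1sum
  obtain ⟨k00, a00⟩ := key (0, 0)
  obtain ⟨k01, a01⟩ := key (0, 1)
  obtain ⟨k10, a10⟩ := key (1, 0)
  obtain ⟨k11, a11⟩ := key (1, 1)
  rw [k00, k01, k10, k11] at hMAsum
  rw [a00, a01, a10, a11] at hπsum
  rw [← hπdef] at hπsum
  have hq' : q ij = (μ (M ⁻¹' {ij} ∩ G ⁻¹' {((0:Fin 2), (0:Fin 2))})).toReal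
      + (μ (M ⁻¹' {ij} ∩ G ⁻¹' {((0:Fin 2), (1:Fin 2))})).toReal
      + ((μ (M ⁻¹' {ij} ∩ G ⁻¹' {((1:Fin 2), (0:Fin 2))})).toReal
      + (μ (M ⁻¹' {ij} ∩ G ⁻¹' {((1:Fin 2), (1:Fin 2))})).toReal) := by
    rw [hq ij, hqsum]
  have hπne : π ≠ 0 := ne_of_gt hπ0
  have main : (μ (M ⁻¹' {ij} ∩ A)).toReal
      = q ij * π + D (0, 0) ij * (πc (0, 0) - πc (0, 1))
        + D (1, 1) ij * (πc (1, 1) - πc (0, 1)) := by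
    rw [hMAsum, hD, hD, Set.inter_comm (G ⁻¹' {((0:Fin 2), (0:Fin 2))}),
      Set.inter_comm (G ⁻¹' {((1:Fin 2), (1:Fin 2))}), hπsum]
    linear_combination πc (0, 1) * hq'.symm + q ij * πc (0, 1) * h1sum
      + (q ij * p (1, 0) - (μ (M ⁻¹' {ij} ∩ G ⁻¹' {((1:Fin 2), (0:Fin 2))})).toReal) * hsym
  rw [main]
  field_simp
end

section
/- Under the setting of Lemma 1, the conditional genotype frequencies among controls satisfy P(M_iM_j | U) = q_{ij} + D₁₁ᵢⱼ(π₁₂-π₁₁)/(1-π) + D₂₂ᵢⱼ(π₁₂-π₂₂)/(1-π). -/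
open MeasureTheory

/-- Lemma 1 of the paper, control version: conditional marker genotype
frequency among controls U = Aᶜ. -/
theorem stmt_4
    {Ω : Type*} [MeasurableSpace Ω] (μ : Measure Ω) [IsProbabilityMeasure μ]
    (A : Set Ω) (hA : MeasurableSet A)
    (G M : Ω → Fin 2 × Fin 2) (hG : Measurable G) (hM : Measurable M)
    (π : ℝ) (hπdef : π = (μ A).toReal) (hπ0 : 0 < π) (hπ1 : π < 1)
    (p : Fin 2 × Fin 2 → ℝ) (hp : ∀ kl, p kl = (μ (G ⁻¹' {kl})).toReal)
    (πc : Fin 2 × Fin 2 → ℝ)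
    (hπc : ∀ kl, πc kl = (μ (A ∩ G ⁻¹' {kl})).toReal / p kl)
    (hsym : πc (0, 1) = πc (1, 0))
    (q : Fin 2 × Fin 2 → ℝ) (hq : ∀ ij, q ij = (μ (M ⁻¹' {ij})).toReal)
    (D : Fin 2 × Fin 2 → Fin 2 × Fin 2 → ℝ)
    (hD : ∀ kl ij, D kl ij = (μ (G ⁻¹' {kl} ∩ M ⁻¹' {ij})).toReal - p kl * q ij)
    (hci : ∀ kl ij,
      (μ (M ⁻¹' {ij} ∩ G ⁻¹' {kl} ∩ A)).toReal * p kl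
        = (μ (M ⁻¹' {ij} ∩ G ⁻¹' {kl})).toReal * (μ (G ⁻¹' {kl} ∩ A)).toReal)
    (ij : Fin 2 × Fin 2) :
    (μ (M ⁻¹' {ij} ∩ Aᶜ)).toReal / (1 - π)
      = q ij + D (0, 0) ij * (πc (0, 1) - πc (0, 0)) / (1 - π)
          + D (1, 1) ij * (πc (0, 1) - πc (1, 1)) / (1 - π) := by
  classical
  have hGm : ∀ kl : Fin 2 × Fin 2, MeasurableSet (G ⁻¹' {kl}) :=
    fun kl => hG (measurableSet_singleton kl)
  -- decomposition of any set along fibers of G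
  have hpart : ∀ S : Set Ω,
      (μ S).toReal = ∑ kl : Fin 2 × Fin 2, (μ (S ∩ G ⁻¹' {kl})).toReal := by
    intro S
    have h1 : (∑ kl ∈ (Finset.univ : Finset (Fin 2 × Fin 2)),
        (μ.restrict S) (G ⁻¹' {kl})) = (μ.restrict S) (G ⁻¹' ↑(Finset.univ : Finset (Fin 2 × Fin 2))) :=
      sum_measure_preimage_singleton _ (fun b _ => hGm b)
    have h2 : (G ⁻¹' ↑(Finset.univ : Finset (Fin 2 × Fin 2))) = Set.univ := by
      simp
    rw [h2] at h1
    have h3 : ∀ kl : Fin 2 × Fin 2, (μ.restrict S) (G ⁻¹' {kl}) = μ (S ∩ G ⁻¹' {kl}) := by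
      intro kl
      rw [Measure.restrict_apply (hGm kl), Set.inter_comm]
    have h4 : (μ.restrict S) Set.univ = μ S := by
      simp [Measure.restrict_apply_univ]
    rw [h4] at h1
    rw [← h1, ENNReal.toReal_sum (fun a _ => measure_ne_top _ _)]
    exact Finset.sum_congr rfl (fun kl _ => by rw [h3 kl])
  set a : Fin 2 × Fin 2 → ℝ := fun kl => (μ (M ⁻¹' {ij} ∩ G ⁻¹' {kl})).toReal with ha_def
  set b : Fin 2 × Fin 2 → ℝ := fun kl => (μ (M ⁻¹' {ij} ∩ G ⁻¹' {kl} ∩ A)).toReal with hb_def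
  -- p kl = 0 implies fiber has measure zero
  have hzero : ∀ kl, p kl = 0 → μ (G ⁻¹' {kl}) = 0 := by
    intro kl h
    rw [hp kl] at h
    exact (ENNReal.toReal_eq_zero_iff _).mp h |>.resolve_right (measure_ne_top _ _)
  -- b kl = a kl * πc kl
  have hba : ∀ kl, b kl = a kl * πc kl := by
    intro kl
    by_cases hpz : p kl = 0
    · have hg0 := hzero kl hpz
      have ha0 : a kl = 0 := by
        simp only [ha_def]
        rw [measure_inter_null_of_null_right _ hg0]
        simp
      have hb0 : b kl = 0 := by
        simp only [hb_def]
        have : μ (M ⁻¹' {ij} ∩ G ⁻¹' {kl} ∩ A) = 0 :=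
          measure_mono_null (by intro x hx; exact hx.1.2) hg0
        rw [this]; simp
      rw [ha0, hb0, zero_mul]
    · have hc := hci kl ij
      have hπckl : πc kl = (μ (G ⁻¹' {kl} ∩ A)).toReal / p kl := by
        rw [hπc kl, Set.inter_comm]
      rw [hπckl]
      field_simp
      linarith [hc]
  -- p kl * πc kl = μ (A ∩ G⁻¹{kl})
  have hppi : ∀ kl, p kl * πc kl = (μ (A ∩ G ⁻¹' {kl})).toReal := by
    intro kl
    by_cases hpz : p kl = 0
    · have hg0 := hzero kl hpz
      have : μ (A ∩ G ⁻¹' {kl}) = 0 := measure_inter_null_of_null_right _ hg0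
      rw [hpz, zero_mul, this]; simp
    · rw [hπc kl]; field_simp
  -- π = ∑ p πc
  have hpisum : π = ∑ kl : Fin 2 × Fin 2, p kl * πc kl := by
    rw [hπdef, hpart A]
    exact Finset.sum_congr rfl (fun kl _ => (hppi kl).symm)
  -- ∑ p = 1
  have hp1 : (∑ kl : Fin 2 × Fin 2, p kl) = 1 := by
    have h := hpart Set.univ
    simp only [Set.univ_inter, measure_univ, ENNReal.toReal_one] at h
    rw [Finset.sum_congr rfl (fun kl (_ : kl ∈ Finset.univ) => hp kl), ← h]
  -- q ij = ∑ a
  have hqsum : q ij = ∑ kl : Fin 2 × Fin 2, a kl := by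
    rw [hq ij, hpart (M ⁻¹' {ij})]
  -- a kl = D kl ij + p kl * q ij
  have haD : ∀ kl, a kl = D kl ij + p kl * q ij := by
    intro kl
    rw [hD kl ij, Set.inter_comm]
    ring
  -- decomposition of the control set
  have hXsum : (μ (M ⁻¹' {ij} ∩ Aᶜ)).toReal
      = ∑ kl : Fin 2 × Fin 2, (a kl - b kl) := by
    rw [hpart (M ⁻¹' {ij} ∩ Aᶜ)]
    refine Finset.sum_congr rfl (fun kl _ => ?_)
    have hdiff : μ (M ⁻¹' {ij} ∩ G ⁻¹' {kl} ∩ A) + μ ((M ⁻¹' {ij} ∩ G ⁻¹' {kl}) \ A)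
        = μ (M ⁻¹' {ij} ∩ G ⁻¹' {kl}) := measure_inter_add_diff _ hA
    have hset : (M ⁻¹' {ij} ∩ G ⁻¹' {kl}) \ A = M ⁻¹' {ij} ∩ Aᶜ ∩ G ⁻¹' {kl} := by
      ext x; simp [Set.mem_diff, Set.mem_inter_iff]; tauto
    rw [hset] at hdiff
    have := congrArg ENNReal.toReal hdiff
    rw [ENNReal.toReal_add (measure_ne_top _ _) (measure_ne_top _ _)] at this
    simp only [ha_def, hb_def]
    linarith [this]
  -- expand all sums over Fin 2 × Fin 2
  simp only [Fintype.sum_prod_type, Fin.sum_univ_two] at hXsum hpisum hp1 hqsum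
  have h00 := hba (0,0); have h01 := hba (0,1); have h10 := hba (1,0); have h11 := hba (1,1)
  have g00 := haD (0,0); have g01 := haD (0,1); have g10 := haD (1,0); have g11 := haD (1,1)
  have key : (μ (M ⁻¹' {ij} ∩ Aᶜ)).toReal
      = q ij * (1 - π) + D (0,0) ij * (πc (0,1) - πc (0,0))
        + D (1,1) ij * (πc (0,1) - πc (1,1)) := by
    rw [hXsum]
    linear_combination (-1 : ℝ) * h00 - h01 - h10 - h11 - hqsum
      - πc (0,0) * g00 - πc (0,1) * g01 - πc (1,0) * g10 - πc (1,1) * g11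
      + q ij * hpisum + D (1,0) ij * hsym
      + πc (0,1) * (g00 + g01 + g10 + g11) + πc (0,1) * hqsum
      + πc (0,1) * q ij * hp1
  have h1π : (1 : ℝ) - π ≠ 0 := by linarith
  rw [key]
  field_simp
end
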